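/- Let N be a finite set and let g : ℝ^N → ℝ. Then g is submodular if and only if for every p ∈ ℝ^N, all distinct i, j ∈ N, and all reals a, b ≥ 0, it holds that g(p + a·e_i) + g(p + b·e_j) ≥ g(p) + g(p + a·e_i + b·e_j), where e_i and e_j are the i-th and j-th unit vectors of ℝ^N. -/
import Mathlib


open Finset

private lemma lemA {N : Type*} [Fintype N] [DecidableEq N] (g : (N → ℝ) → ℝ)
    (H : ∀ p : N → ℝ, ∀ i j : N, i ≠ j → ∀ a b : ℝ, 0 ≤ a → 0 ≤ b →
      g p + g (p + Pi.single i a + Pi.single j b) ≤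
        g (p + Pi.single i a) + g (p + Pi.single j b)) :
    ∀ s : Finset N, ∀ u : N → ℝ, (∀ k, 0 ≤ u k) → (∀ k ∉ s, u k = 0) →
      ∀ m : N → ℝ, ∀ i ∉ s, ∀ a : ℝ, 0 ≤ a →
      g m + g (m + u + Pi.single i a) ≤ g (m + u) + g (m + Pi.single i a) := by
  intro s
  induction s using Finset.induction with
  | empty =>
    intro u hu hsupp m i _ a ha
    have hu0 : u = 0 := funext fun k => hsupp k (Finset.notMem_empty k)
    simp [hu0]
  | @insert k s' hk ih =>
    intro u hu hsupp m i hi a ha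
    set u' : N → ℝ := Function.update u k 0 with hu'def
    have hdecomp : u = u' + Pi.single k (u k) := by
      funext x
      by_cases hx : x = k
      · subst hx; simp [hu'def]
      · simp [hu'def, Function.update_of_ne hx, Pi.single_apply, hx]
    have hki : k ≠ i := fun h => hi (h ▸ Finset.mem_insert_self k s')
    have h1 := ih u'
      (fun x => by
        by_cases hx : x = k
        · subst hx; simp [hu'def]
        · simpa [hu'def, Function.update_of_ne hx] using hu x)
      (fun x hx => by
        by_cases hxk : x = k
        · simp [hu'def, hxk]
        · rw [hu'def, Function.update_of_ne hxk]
          exact hsupp x (by simp [hxk, hx]))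
      m i (fun h => hi (Finset.mem_insert_of_mem h)) a ha
    have h2 := H (m + u') k i hki (u k) a (hu k) ha
    have e1 : m + u' + Pi.single k (u k) = m + u := by
      conv_rhs => rw [hdecomp]
      ring
    have e2 : m + u' + Pi.single k (u k) + Pi.single i a = m + u + Pi.single i a := by
      rw [e1]
    rw [e2, e1] at h2
    linarith
  
private lemma lemB {N : Type*} [Fintype N] [DecidableEq N] (g : (N → ℝ) → ℝ)
    (H : ∀ p : N → ℝ, ∀ i j : N, i ≠ j → ∀ a b : ℝ, 0 ≤ a → 0 ≤ b →
      g p + g (p + Pi.single i a + Pi.single j b) ≤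
        g (p + Pi.single i a) + g (p + Pi.single j b)) :
    ∀ t : Finset N, ∀ v : N → ℝ, (∀ k, 0 ≤ v k) → (∀ k ∉ t, v k = 0) →
      ∀ u : N → ℝ, (∀ k, 0 ≤ u k) → (∀ k ∈ t, u k = 0) →
      ∀ m : N → ℝ, g m + g (m + u + v) ≤ g (m + u) + g (m + v) := by
  intro t
  induction t using Finset.induction with
  | empty =>
    intro v hv hsupp u hu huz m
    have hv0 : v = 0 := funext fun k => hsupp k (Finset.notMem_empty k)
    simp only [hv0, add_zero]
    linarith
  | @insert j t' hj ih =>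
    intro v hv hsupp u hu huz m
    set v' : N → ℝ := Function.update v j 0 with hv'def
    have hdecomp : v = v' + Pi.single j (v j) := by
      funext x
      by_cases hx : x = j
      · subst hx; simp [hv'def]
      · simp [hv'def, Function.update_of_ne hx, Pi.single_apply, hx]
    have h1 := ih v'
      (fun x => by
        by_cases hx : x = j
        · subst hx; simp [hv'def]
        · simpa [hv'def, Function.update_of_ne hx] using hv x)
      (fun x hx => by
        by_cases hxj : x = j
        · simp [hv'def, hxj]
        · rw [hv'def, Function.update_of_ne hxj]
          exact hsupp x (by simp [hxj, hx]))
      u hu (fun k hk => huz k (Finset.mem_insert_of_mem hk)) m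
    have hjs : j ∉ Finset.univ.filter (fun x => u x ≠ 0) := by
      simp [huz j (Finset.mem_insert_self j t')]
    have h2 := lemA g H (Finset.univ.filter (fun x => u x ≠ 0)) u hu
      (fun k hk => by
        by_contra h
        exact hk (Finset.mem_filter.mpr ⟨Finset.mem_univ k, h⟩))
      (m + v') j hjs (v j) (hv j)
    have e1 : m + v' + Pi.single j (v j) = m + v := by
      conv_rhs => rw [hdecomp]
      ring
    have e2 : m + v' + u + Pi.single j (v j) = m + u + v := by
      conv_rhs => rw [hdecomp]
      ring
    have e3 : m + v' + u = m + u + v' := by ring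
    rw [e2, e1, e3] at h2
    linarith

/-- A function `g : ℝ^N → ℝ` is submodular iff for every `p`, all distinct
`i, j ∈ N` and all `a, b ≥ 0`,
`g(p + a·e_i) + g(p + b·e_j) ≥ g(p) + g(p + a·e_i + b·e_j)`. -/
theorem submodular_iff_local
    {N : Type*} [Fintype N] [DecidableEq N]
    (g : (N → ℝ) → ℝ) :
    (∀ p q : N → ℝ, g (p ⊔ q) + g (p ⊓ q) ≤ g p + g q)
    ↔
    (∀ p : N → ℝ, ∀ i j : N, i ≠ j → ∀ a b : ℝ, 0 ≤ a → 0 ≤ b →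
      g p + g (p + Pi.single i a + Pi.single j b) ≤
        g (p + Pi.single i a) + g (p + Pi.single j b)) := by
  constructor
  · intro H p i j hij a b ha hb
    have h := H (p + Pi.single i a) (p + Pi.single j b)
    have hsup : (p + Pi.single i a) ⊔ (p + Pi.single j b)
        = p + Pi.single i a + Pi.single j b := by
      funext x
      simp only [Pi.sup_apply, Pi.add_apply, Pi.single_apply]
      by_cases hxi : x = i
      · subst hxi
        rw [if_pos rfl, if_neg hij, max_eq_left (by simp; linarith)]
        ring
      · by_cases hxj : x = j
        · subst hxj
          rw [if_neg hxi, if_pos rfl]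
          rw [max_eq_right (by linarith)]
          ring
        · rw [if_neg hxi, if_neg hxj]
          simp
    have hinf : (p + Pi.single i a) ⊓ (p + Pi.single j b) = p := by
      funext x
      simp only [Pi.inf_apply, Pi.add_apply, Pi.single_apply]
      by_cases hxi : x = i
      · subst hxi
        rw [if_pos rfl, if_neg hij]
        rw [min_eq_right (by linarith)]
        ring
      · by_cases hxj : x = j
        · subst hxj
          rw [if_neg hxi, if_pos rfl]
          rw [min_eq_left (by linarith)]
          ring
        · rw [if_neg hxi, if_neg hxj]
          simp
    rw [hsup, hinf] at h
    linarith
  · intro H p q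
    set m : N → ℝ := p ⊓ q with hm
    set u : N → ℝ := p - m with hu'
    set v : N → ℝ := q - m with hv'
    have hu : ∀ k, 0 ≤ u k := fun k => by
      simp [hu', hm, Pi.inf_apply, min_le_left]
    have hv : ∀ k, 0 ≤ v k := fun k => by
      simp [hv', hm, Pi.inf_apply, min_le_right]
    have huz : ∀ k ∈ Finset.univ.filter (fun x => v x ≠ 0), u k = 0 := by
      intro k hk
      have hvk : v k ≠ 0 := (Finset.mem_filter.mp hk).2
      rcases le_total (p k) (q k) with hle | hle
      · simp [hu', hm, Pi.inf_apply, min_eq_left hle]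
      · exfalso
        apply hvk
        simp [hv', hm, Pi.inf_apply, min_eq_right hle]
    have h := lemB g H (Finset.univ.filter (fun x => v x ≠ 0)) v hv
      (fun k hk => by
        by_contra h
        exact hk (Finset.mem_filter.mpr ⟨Finset.mem_univ k, h⟩))
      u hu huz m
    have e1 : m + u = p := by rw [hu']; ring
    have e2 : m + v = q := by rw [hv']; ring
    have e3 : m + u + v = p ⊔ q := by
      funext k
      have hmm := max_add_min (p k) (q k)
      simp only [hu', hv', hm, Pi.add_apply, Pi.sub_apply, Pi.inf_apply, Pi.sup_apply] at *
      linarith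
    rw [e3, e1, e2] at h
    have e4 : m = p ⊓ q := hm
    rw [e4] at h
    linarith
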